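/- arXiv:2009.00176 — 2 statements merged into one kernel-verified Lean document; each statement's English description precedes it below -/
import Mathlib

section
/- For every formula A of the language L of intuitionistic predicate logic, the formula A^t → □_F A^t is provable in Q∘S4.t. -/
/-! ## Propositional intuitionistic formulas and IPC -/

inductive PropForm : Type
  | var : ℕ → PropForm
  | falsum : PropForm
  | and : PropForm → PropForm → PropForm
  | or : PropForm → PropForm → PropForm
  | impl : PropForm → PropForm → PropForm

/-- Hilbert-style intuitionistic propositional calculus. -/
inductive IPC : PropForm → Prop
  | ax1 (A B : PropForm) : IPC (A.impl (B.impl A))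
  | ax2 (A B C : PropForm) : IPC ((A.impl (B.impl C)).impl ((A.impl B).impl (A.impl C)))
  | andE1 (A B : PropForm) : IPC ((A.and B).impl A)
  | andE2 (A B : PropForm) : IPC ((A.and B).impl B)
  | andI (A B : PropForm) : IPC (A.impl (B.impl (A.and B)))
  | orI1 (A B : PropForm) : IPC (A.impl (A.or B))
  | orI2 (A B : PropForm) : IPC (B.impl (A.or B))
  | orE (A B C : PropForm) : IPC ((A.impl C).impl ((B.impl C).impl ((A.or B).impl C)))
  | exfalso (A : PropForm) : IPC (PropForm.falsum.impl A)
  | mp (A B : PropForm) : IPC (A.impl B) → IPC A → IPC B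

/-! ## Bimodal propositional formulas and S4.t -/

inductive BForm : Type
  | var : ℕ → BForm
  | falsum : BForm
  | impl : BForm → BForm → BForm
  | boxF : BForm → BForm
  | boxP : BForm → BForm

def BForm.neg (A : BForm) : BForm := A.impl .falsum
def BForm.diaF (A : BForm) : BForm := (A.neg.boxF).neg
def BForm.diaP (A : BForm) : BForm := (A.neg.boxP).neg

/-- The tense propositional logic S4.t: classical propositional logic, S4 axioms
for both `boxF` and `boxP`, the two tense axioms, MP and both necessitations. -/
inductive S4t : BForm → Prop
  | ax1 (A B : BForm) : S4t (A.impl (B.impl A))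
  | ax2 (A B C : BForm) : S4t ((A.impl (B.impl C)).impl ((A.impl B).impl (A.impl C)))
  | ax3 (A B : BForm) : S4t (((B.neg).impl (A.neg)).impl (A.impl B))
  | kF (A B : BForm) : S4t ((A.impl B).boxF.impl (A.boxF.impl B.boxF))
  | tF (A : BForm) : S4t (A.boxF.impl A)
  | fourF (A : BForm) : S4t (A.boxF.impl A.boxF.boxF)
  | kP (A B : BForm) : S4t ((A.impl B).boxP.impl (A.boxP.impl B.boxP))
  | tP (A : BForm) : S4t (A.boxP.impl A)
  | fourP (A : BForm) : S4t (A.boxP.impl A.boxP.boxP)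
  | tense1 (A : BForm) : S4t (A.impl A.diaF.boxP)
  | tense2 (A : BForm) : S4t (A.impl A.diaP.boxF)
  | mp (A B : BForm) : S4t (A.impl B) → S4t A → S4t B
  | necF (A : BForm) : S4t A → S4t A.boxF
  | necP (A : BForm) : S4t A → S4t A.boxP

/-! ## Predicate tense formulas (the language L_T) -/

/-- Formulas of the bimodal predicate language `L_T`.  The classical basis means
that `⊥, →, ∀, □F, □P` are primitive; the remaining connectives are the usual
classical abbreviations, defined below. -/
inductive TForm : Type
  | falsum : TForm
  | atom : ℕ → List ℕ → TForm
  | impl : TForm → TForm → TForm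
  | all : ℕ → TForm → TForm
  | boxF : TForm → TForm
  | boxP : TForm → TForm

def TForm.neg (A : TForm) : TForm := A.impl .falsum
def TForm.and (A B : TForm) : TForm := (A.impl B.neg).neg
def TForm.or (A B : TForm) : TForm := (A.neg).impl B
def TForm.iff (A B : TForm) : TForm := (A.impl B).and (B.impl A)
def TForm.ex (x : ℕ) (A : TForm) : TForm := (TForm.all x A.neg).neg
def TForm.diaF (A : TForm) : TForm := A.neg.boxF.neg
def TForm.diaP (A : TForm) : TForm := A.neg.boxP.neg

def TForm.freeVars : TForm → Finset ℕ
  | .falsum => ∅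
  | .atom _ args => args.toFinset
  | .impl A B => A.freeVars ∪ B.freeVars
  | .all x A => A.freeVars.erase x
  | .boxF A => A.freeVars
  | .boxP A => A.freeVars

/-- Replace every free occurrence of the variable `x` by `y`. -/
def TForm.subst (x y : ℕ) : TForm → TForm
  | .falsum => .falsum
  | .atom p args => .atom p (args.map fun v => if v = x then y else v)
  | .impl A B => .impl (A.subst x y) (B.subst x y)
  | .all z A => if z = x then .all z A else .all z (A.subst x y)
  | .boxF A => .boxF (A.subst x y)
  | .boxP A => .boxP (A.subst x y)

/-- `y` is substitutable for `x`: no free occurrence of `x` lies in the scope of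
a quantifier binding `y`. -/
def TForm.substOK (x y : ℕ) : TForm → Prop
  | .falsum => True
  | .atom _ _ => True
  | .impl A B => A.substOK x y ∧ B.substOK x y
  | .all z A => z = x ∨ ((z = y → x ∉ A.freeVars) ∧ A.substOK x y)
  | .boxF A => A.substOK x y
  | .boxP A => A.substOK x y

/-- Substitution of `L_T`-formulas for the propositional letters of a bimodal
propositional formula. -/
def BForm.tsubst (s : ℕ → TForm) : BForm → TForm
  | .var n => s n
  | .falsum => .falsum
  | .impl A B => .impl (A.tsubst s) (B.tsubst s)
  | .boxF A => .boxF (A.tsubst s)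
  | .boxP A => .boxP (A.tsubst s)

/-! ## The predicate tense logic Q∘S4.t -/

inductive QoS4t : TForm → Prop
  /-- all substitution instances of theorems of S4.t -/
  | s4t (φ : BForm) (s : ℕ → TForm) : S4t φ → QoS4t (φ.tsubst s)
  /-- (UI°)  ∀y(∀x A → A(y/x)) -/
  | ui (x y : ℕ) (A : TForm) (hok : A.substOK x y) :
      QoS4t (.all y ((TForm.all x A).impl (A.subst x y)))
  /-- ∀x(A → B) → (∀x A → ∀x B) -/
  | distrib (x : ℕ) (A B : TForm) :
      QoS4t ((TForm.all x (A.impl B)).impl ((TForm.all x A).impl (TForm.all x B)))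
  /-- ∀x∀y A ↔ ∀y∀x A -/
  | comm (x y : ℕ) (A : TForm) :
      QoS4t ((TForm.all x (TForm.all y A)).iff (TForm.all y (TForm.all x A)))
  /-- A → ∀x A, x not free in A -/
  | vac (x : ℕ) (A : TForm) (h : x ∉ A.freeVars) : QoS4t (A.impl (.all x A))
  /-- (NID)  ∀x A → A, x not free in A -/
  | nid (x : ℕ) (A : TForm) (h : x ∉ A.freeVars) : QoS4t ((TForm.all x A).impl A)
  /-- (CBF_F)  □F ∀x A → ∀x □F A -/
  | cbfF (x : ℕ) (A : TForm) : QoS4t ((TForm.all x A).boxF.impl (TForm.all x A.boxF))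
  | mp (A B : TForm) : QoS4t (A.impl B) → QoS4t A → QoS4t B
  | gen (x : ℕ) (A : TForm) : QoS4t A → QoS4t (.all x A)
  | necF (A : TForm) : QoS4t A → QoS4t A.boxF
  | necP (A : TForm) : QoS4t A → QoS4t A.boxP

/-! ## The language L of intuitionistic predicate logic and IQC -/

inductive IForm : Type
  | falsum : IForm
  | atom : ℕ → List ℕ → IForm
  | and : IForm → IForm → IForm
  | or : IForm → IForm → IForm
  | impl : IForm → IForm → IForm
  | all : ℕ → IForm → IForm
  | ex : ℕ → IForm → IForm

def IForm.freeVars : IForm → Finset ℕ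
  | .falsum => ∅
  | .atom _ args => args.toFinset
  | .and A B => A.freeVars ∪ B.freeVars
  | .or A B => A.freeVars ∪ B.freeVars
  | .impl A B => A.freeVars ∪ B.freeVars
  | .all x A => A.freeVars.erase x
  | .ex x A => A.freeVars.erase x

def IForm.subst (x y : ℕ) : IForm → IForm
  | .falsum => .falsum
  | .atom p args => .atom p (args.map fun v => if v = x then y else v)
  | .and A B => .and (A.subst x y) (B.subst x y)
  | .or A B => .or (A.subst x y) (B.subst x y)
  | .impl A B => .impl (A.subst x y) (B.subst x y)
  | .all z A => if z = x then .all z A else .all z (A.subst x y)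
  | .ex z A => if z = x then .ex z A else .ex z (A.subst x y)

def IForm.substOK (x y : ℕ) : IForm → Prop
  | .falsum => True
  | .atom _ _ => True
  | .and A B => A.substOK x y ∧ B.substOK x y
  | .or A B => A.substOK x y ∧ B.substOK x y
  | .impl A B => A.substOK x y ∧ B.substOK x y
  | .all z A => z = x ∨ ((z = y → x ∉ A.freeVars) ∧ A.substOK x y)
  | .ex z A => z = x ∨ ((z = y → x ∉ A.freeVars) ∧ A.substOK x y)

/-- Substitution of `L`-formulas for the propositional letters of an
intuitionistic propositional formula. -/
def PropForm.isubst (s : ℕ → IForm) : PropForm → IForm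
  | .var n => s n
  | .falsum => .falsum
  | .and A B => .and (A.isubst s) (B.isubst s)
  | .or A B => .or (A.isubst s) (B.isubst s)
  | .impl A B => .impl (A.isubst s) (B.isubst s)

/-- The intuitionistic predicate calculus IQC. -/
inductive IQC : IForm → Prop
  /-- all substitution instances of theorems of IPC -/
  | ipc (φ : PropForm) (s : ℕ → IForm) : IPC φ → IQC (φ.isubst s)
  /-- (UI)  ∀x A → A(y/x) -/
  | ui (x y : ℕ) (A : IForm) (hok : A.substOK x y) :
      IQC ((IForm.all x A).impl (A.subst x y))
  /-- A(y/x) → ∃x A -/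
  | exI (x y : ℕ) (A : IForm) (hok : A.substOK x y) :
      IQC ((A.subst x y).impl (IForm.ex x A))
  /-- ∀x(A → B) → (A → ∀x B), x not free in A -/
  | allImp (x : ℕ) (A B : IForm) (h : x ∉ A.freeVars) :
      IQC ((IForm.all x (A.impl B)).impl (A.impl (IForm.all x B)))
  /-- ∀x(A → B) → (∃x A → B), x not free in B -/
  | exImp (x : ℕ) (A B : IForm) (h : x ∉ B.freeVars) :
      IQC ((IForm.all x (A.impl B)).impl ((IForm.ex x A).impl B))
  | mp (A B : IForm) : IQC (A.impl B) → IQC A → IQC B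
  | gen (x : ℕ) (A : IForm) : IQC A → IQC (.all x A)

/-! ## The temporal Gödel translation -/

def IForm.t : IForm → TForm
  | .falsum => .falsum
  | .atom p args => .boxF (.atom p args)
  | .and A B => TForm.and A.t B.t
  | .or A B => TForm.or A.t B.t
  | .impl A B => .boxF (A.t.impl B.t)
  | .all x A => .boxF (.all x A.t)
  | .ex x A => TForm.diaP (TForm.ex x A.t)

/-- `closure [x₁,…,xₙ] A = ∀x₁ ⋯ ∀xₙ A`. -/
def TForm.closure (xs : List ℕ) (A : TForm) : TForm := xs.foldr TForm.all A

/-! ## Generalized Kripke semantics for Q∘S4.t -/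

/-- A Q∘S4.t-frame: a reflexive transitive relation on a nonempty set of worlds,
a nonempty constant outer domain `U`, and nonempty increasing inner domains. -/
structure TFrame where
  W : Type
  U : Type
  hW : Nonempty W
  hU : Nonempty U
  R : W → W → Prop
  refl : ∀ w, R w w
  trans : ∀ {u v w}, R u v → R v w → R u w
  D : W → Set U
  Dne : ∀ w, (D w).Nonempty
  Dmono : ∀ {w v}, R w v → D w ⊆ D v

/-- A model based on a Q∘S4.t-frame: interprets each predicate symbol at each
world as a relation on the outer domain. -/
structure TModel (F : TFrame) where
  I : F.W → ℕ → List F.U → Prop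

/-- Truth of an `L_T`-formula at a world under an assignment. -/
def TModel.truth {F : TFrame} (M : TModel F) : F.W → (ℕ → F.U) → TForm → Prop
  | _, _, .falsum => False
  | w, σ, .atom p args => M.I w p (args.map σ)
  | w, σ, .impl A B => M.truth w σ A → M.truth w σ B
  | w, σ, .all x A =>
      ∀ τ : ℕ → F.U, (∀ y, y ≠ x → τ y = σ y) → τ x ∈ F.D w → M.truth w τ A
  | w, σ, .boxF A => ∀ v, F.R w v → M.truth v σ A
  | w, σ, .boxP A => ∀ v, F.R v w → M.truth v σ A

/-- Validity of an `L_T`-formula in a Q∘S4.t-frame. -/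
def TFrame.valid (F : TFrame) (A : TForm) : Prop :=
  ∀ M : TModel F, ∀ w : F.W, ∀ σ : ℕ → F.U, M.truth w σ A

/-! ## Kripke semantics for IQC -/

/-- An IQC-frame: a partial order on a nonempty set of worlds with nonempty
increasing domains. -/
structure IFrame where
  W : Type
  α : Type
  hW : Nonempty W
  R : W → W → Prop
  refl : ∀ w, R w w
  trans : ∀ {u v w}, R u v → R v w → R u w
  antisymm : ∀ {u v}, R u v → R v u → u = v
  D : W → Set α
  Dne : ∀ w, (D w).Nonempty
  Dmono : ∀ {w v}, R w v → D w ⊆ D v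

/-- An IQC-model: `I w P ⊆ (D w)ⁿ`, increasing along `R`. -/
structure IModel (F : IFrame) where
  I : F.W → ℕ → List F.α → Prop
  Isub : ∀ w p as, I w p as → ∀ a ∈ as, a ∈ F.D w
  Imono : ∀ {w v} (p : ℕ) (as : List F.α), F.R w v → I w p as → I v p as

/-- Intuitionistic truth of an `L`-formula at a world under an assignment. -/
def IModel.truth {F : IFrame} (M : IModel F) : F.W → (ℕ → F.α) → IForm → Prop
  | _, _, .falsum => False
  | w, σ, .atom p args => M.I w p (args.map σ)
  | w, σ, .and A B => M.truth w σ A ∧ M.truth w σ B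
  | w, σ, .or A B => M.truth w σ A ∨ M.truth w σ B
  | w, σ, .impl A B => ∀ v, F.R w v → M.truth v σ A → M.truth v σ B
  | w, σ, .all x A =>
      ∀ v, F.R w v → ∀ τ : ℕ → F.α, (∀ y, y ≠ x → τ y = σ y) → τ x ∈ F.D v →
        M.truth v τ A
  | w, σ, .ex x A =>
      ∃ τ : ℕ → F.α, (∀ y, y ≠ x → τ y = σ y) ∧ τ x ∈ F.D w ∧ M.truth w τ A

/-! ## The associated Q∘S4.t-model M̄ -/

/-- The Q∘S4.t-frame associated to an IQC-frame: same worlds and relation,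
outer domain `U = ⋃ { D_w ∣ w ∈ W }`, same inner domains. -/
def IFrame.bar (F : IFrame) : TFrame where
  W := F.W
  U := {a : F.α // ∃ w, a ∈ F.D w}
  hW := F.hW
  hU := by
    obtain ⟨w⟩ := F.hW
    obtain ⟨a, ha⟩ := F.Dne w
    exact ⟨⟨a, w, ha⟩⟩
  R := F.R
  refl := F.refl
  trans := F.trans
  D := fun w => {a | a.1 ∈ F.D w}
  Dne := fun w => by
    obtain ⟨a, ha⟩ := F.Dne w
    exact ⟨⟨a, w, ha⟩, ha⟩
  Dmono := fun h _ ha => F.Dmono h ha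

/-- The Q∘S4.t-model `M̄` associated to an IQC-model `M`. -/
def IModel.bar {F : IFrame} (M : IModel F) : TModel F.bar where
  I := fun w p as => M.I w p (as.map Subtype.val)

/-! ## Auxiliary: derivations in S4t from hypotheses, deduction theorem -/

theorem S4t_id (A : BForm) : S4t (A.impl A) :=
  S4t.mp _ _ (S4t.mp _ _ (S4t.ax2 A (A.impl A) A) (S4t.ax1 A (A.impl A))) (S4t.ax1 A A)

inductive SH : List BForm → BForm → Prop
  | hyp {Γ A} : A ∈ Γ → SH Γ A
  | thm {Γ A} : S4t A → SH Γ A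
  | mp {Γ A B} : SH Γ (A.impl B) → SH Γ A → SH Γ B

theorem SH.h0 {Γ : List BForm} {A : BForm} : SH (A :: Γ) A := .hyp List.mem_cons_self

theorem SH.weak {Γ Γ' : List BForm} {A : BForm} (h : SH Γ A) (hs : ∀ x ∈ Γ, x ∈ Γ') :
    SH Γ' A := by
  induction h generalizing Γ' with
  | hyp hm => exact .hyp (hs _ hm)
  | thm ht => exact .thm ht
  | mp _ _ ih1 ih2 => exact .mp (ih1 hs) (ih2 hs)

theorem SH.w1 {Γ : List BForm} {A B : BForm} (h : SH Γ B) : SH (A :: Γ) B :=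
  h.weak fun x hx => List.mem_cons_of_mem _ hx

theorem SH.ded_aux {Δ : List BForm} {B : BForm} (h : SH Δ B) :
    ∀ {A : BForm} {Γ : List BForm}, Δ = A :: Γ → SH Γ (A.impl B) := by
  induction h with
  | hyp hm =>
      intro A Γ hΔ; subst hΔ
      rcases List.mem_cons.mp hm with rfl | hm
      · exact .thm (S4t_id _)
      · exact .mp (.thm (S4t.ax1 _ _)) (.hyp hm)
  | thm ht => intro A Γ _; exact .mp (.thm (S4t.ax1 _ _)) (.thm ht)
  | mp _ _ ih1 ih2 =>
      intro A Γ hΔ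
      exact .mp (.mp (.thm (S4t.ax2 _ _ _)) (ih1 hΔ)) (ih2 hΔ)

theorem SH.ded {Γ : List BForm} {A B : BForm} (h : SH (A :: Γ) B) : SH Γ (A.impl B) :=
  h.ded_aux rfl

theorem SH.toS4t_aux {Δ : List BForm} {A : BForm} (h : SH Δ A) : Δ = [] → S4t A := by
  induction h with
  | hyp hm => intro hΔ; subst hΔ; simp at hm
  | thm ht => intro _; exact ht
  | mp _ _ ih1 ih2 => intro hΔ; exact S4t.mp _ _ (ih1 hΔ) (ih2 hΔ)

theorem SH.toS4t {A : BForm} (h : SH [] A) : S4t A := h.toS4t_aux rfl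

theorem S4t_botE (A : BForm) : S4t (BForm.falsum.impl A) :=
  S4t.mp _ _ (S4t.ax3 .falsum A) (S4t.mp _ _ (S4t.ax1 _ _) (S4t_id .falsum))

theorem S4t_dni (A : BForm) : S4t (A.impl A.neg.neg) :=
  SH.toS4t (.ded (.ded (.mp SH.h0 (SH.h0.w1))))

theorem S4t_dne (A : BForm) : S4t (A.neg.neg.impl A) :=
  S4t.mp _ _ (S4t.ax3 A.neg.neg A) (S4t_dni A.neg)

theorem S4t_syl {A B C : BForm} (h1 : S4t (A.impl B)) (h2 : S4t (B.impl C)) :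
    S4t (A.impl C) :=
  SH.toS4t (.ded (.mp (.thm h2) (.mp (.thm h1) .h0)))

theorem S4t_contrap {A B : BForm} (h : S4t (A.impl B)) : S4t (B.neg.impl A.neg) :=
  SH.toS4t (.ded (.ded (.mp (SH.h0.w1) (.mp (.thm h) .h0))))

/-- classical dilemma inside SH -/
theorem SH.cases {Γ : List BForm} {A X : BForm}
    (h1 : SH Γ (A.impl X)) (h2 : SH Γ (A.neg.impl X)) : SH Γ X := by
  have hna : SH (X.neg :: Γ) A.neg :=
    .ded (.mp (SH.h0.w1) (.mp (h1.w1.w1) .h0))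
  have hbot : SH (X.neg :: Γ) .falsum := .mp .h0 (.mp (h2.w1) hna)
  exact .mp (.thm (S4t_dne X)) (.ded hbot)

def BForm.band (a b : BForm) : BForm := (a.impl b.neg).neg
def BForm.bor (a b : BForm) : BForm := a.neg.impl b

theorem S4t_Tand (a b : BForm) :
    S4t ((a.impl a.boxF).impl ((b.impl b.boxF).impl
      ((a.band b).impl (a.band b).boxF))) := by
  -- context Γ = [a∧b, b→□Fb, a→□Fa]
  apply SH.toS4t; apply SH.ded; apply SH.ded; apply SH.ded
  set Γ : List BForm := [a.band b, b.impl b.boxF, a.impl a.boxF] with hΓ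
  have h : SH Γ ((a.impl b.neg).impl .falsum) := SH.h0
  have h2 : SH Γ (b.impl b.boxF) := SH.h0.w1
  have h1 : SH Γ (a.impl a.boxF) := SH.h0.w1.w1
  have pa : SH Γ a := by
    have hab : SH (a.neg :: Γ) (a.impl b.neg) :=
      .ded (.mp (.thm (S4t_botE b.neg)) (.mp (SH.h0.w1) .h0))
    exact .mp (.thm (S4t_dne a)) (.ded (.mp (h.w1) hab))
  have pb : SH Γ b := by
    have hab : SH (b.neg :: Γ) (a.impl b.neg) := .mp (.thm (S4t.ax1 b.neg a)) .h0
    exact .mp (.thm (S4t_dne b)) (.ded (.mp (h.w1) hab))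
  have pairI : S4t (a.impl (b.impl (a.band b))) :=
    SH.toS4t (.ded (.ded (.ded (.mp (.mp .h0 (SH.h0.w1.w1)) (SH.h0.w1)))))
  have boxa : SH Γ a.boxF := .mp h1 pa
  have boxb : SH Γ b.boxF := .mp h2 pb
  exact .mp (.mp (.thm (S4t.kF b (a.band b)))
    (.mp (.mp (.thm (S4t.kF a (b.impl (a.band b)))) (.thm (S4t.necF _ pairI))) boxa)) boxb

theorem S4t_Tor (a b : BForm) :
    S4t ((a.impl a.boxF).impl ((b.impl b.boxF).impl
      ((a.bor b).impl (a.bor b).boxF))) := by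
  apply SH.toS4t; apply SH.ded; apply SH.ded; apply SH.ded
  set Γ : List BForm := [a.bor b, b.impl b.boxF, a.impl a.boxF] with hΓ
  have h : SH Γ (a.neg.impl b) := SH.h0
  have h2 : SH Γ (b.impl b.boxF) := SH.h0.w1
  have h1 : SH Γ (a.impl a.boxF) := SH.h0.w1.w1
  have caseA : SH Γ (a.impl (a.bor b).boxF) := by
    have boxa : SH (a :: Γ) a.boxF := .mp (h1.w1) .h0
    have lem : S4t (a.impl (a.bor b)) :=
      SH.toS4t (.ded (.ded (.mp (.thm (S4t_botE b)) (.mp .h0 (SH.h0.w1)))))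
    exact .ded (.mp (.mp (.thm (S4t.kF a (a.bor b))) (.thm (S4t.necF _ lem))) boxa)
  have caseNA : SH Γ (a.neg.impl (a.bor b).boxF) := by
    have pb : SH (a.neg :: Γ) b := .mp (h.w1) .h0
    have boxb : SH (a.neg :: Γ) b.boxF := .mp (h2.w1) pb
    exact .ded (.mp (.mp (.thm (S4t.kF b (a.bor b)))
      (.thm (S4t.necF _ (S4t.ax1 b a.neg)))) boxb)
  exact SH.cases caseA caseNA

theorem S4t_TdiaP (a : BForm) : S4t (a.diaP.impl a.diaP.boxF) := by
  have c1 : S4t (a.neg.boxP.impl a.neg.boxP.boxP) := S4t.fourP a.neg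
  have c2 : S4t (a.neg.boxP.boxP.impl (a.neg.boxP.neg.neg).boxP) :=
    S4t.mp _ _ (S4t.kP (a.neg.boxP) (a.neg.boxP.neg.neg)) (S4t.necP _ (S4t_dni a.neg.boxP))
  have c : S4t (a.neg.boxP.impl (a.neg.boxP.neg.neg).boxP) := S4t_syl c1 c2
  have step1 : S4t (a.diaP.diaP.impl a.diaP) := S4t_contrap c
  have step2 : S4t (a.diaP.diaP.boxF.impl a.diaP.boxF) :=
    S4t.mp _ _ (S4t.kF _ _) (S4t.necF _ step1)
  exact S4t_syl (S4t.tense2 a.diaP) step2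

/-- For every formula `A` of `L`, the formula `A^t → □F A^t` is provable in
Q∘S4.t. -/
theorem translation_implies_boxF_translation (A : IForm) :
    QoS4t (A.t.impl (TForm.boxF A.t)) := by
  induction A with
  | falsum =>
      exact QoS4t.s4t (BForm.falsum.impl BForm.falsum.boxF) (fun _ => .falsum)
        (S4t_botE _)
  | atom p args =>
      exact QoS4t.s4t ((BForm.var 0).boxF.impl (BForm.var 0).boxF.boxF)
        (fun _ => .atom p args) (S4t.fourF _)
  | and A B ihA ihB =>
      exact QoS4t.mp _ _ (QoS4t.mp _ _
        (QoS4t.s4t _ (fun n => if n = 0 then A.t else B.t)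
          (S4t_Tand (.var 0) (.var 1))) ihA) ihB
  | or A B ihA ihB =>
      exact QoS4t.mp _ _ (QoS4t.mp _ _
        (QoS4t.s4t _ (fun n => if n = 0 then A.t else B.t)
          (S4t_Tor (.var 0) (.var 1))) ihA) ihB
  | impl A B ihA ihB =>
      exact QoS4t.s4t ((BForm.var 0).boxF.impl (BForm.var 0).boxF.boxF)
        (fun _ => A.t.impl B.t) (S4t.fourF _)
  | all x A ih =>
      exact QoS4t.s4t ((BForm.var 0).boxF.impl (BForm.var 0).boxF.boxF)
        (fun _ => .all x A.t) (S4t.fourF _)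
  | ex x A ih =>
      exact QoS4t.s4t ((BForm.var 0).diaP.impl (BForm.var 0).diaP.boxF)
        (fun _ => TForm.ex x A.t) (S4t_TdiaP _)
end

section
/- Let A be a formula of the language L of intuitionistic predicate logic with free variables x₁, …, xₙ, M = (F, I) an IQC-model based on an IQC-frame F = (W, R, D), and w ∈ W. Then M ⊨_w A (intuitionistic truth at w under all w-assignments) if and only if M̄ ⊨_w ∀x₁ ⋯ ∀xₙ A^t (classical temporal truth at w in the associated Q∘S4.t-model M̄). -/
/-! ## Auxiliary lemmas -/

section Aux

open Classical

lemma truth_and {F : TFrame} (M : TModel F) (w : F.W) (σ : ℕ → F.U) (A B : TForm) :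
    M.truth w σ (TForm.and A B) ↔ M.truth w σ A ∧ M.truth w σ B := by
  simp [TForm.and, TForm.neg, TModel.truth]

lemma truth_or {F : TFrame} (M : TModel F) (w : F.W) (σ : ℕ → F.U) (A B : TForm) :
    M.truth w σ (TForm.or A B) ↔ M.truth w σ A ∨ M.truth w σ B := by
  simp [TForm.or, TForm.neg, TModel.truth]
  tauto

lemma truth_diaP {F : TFrame} (M : TModel F) (w : F.W) (σ : ℕ → F.U) (A : TForm) :
    M.truth w σ (TForm.diaP A) ↔ ∃ v, F.R v w ∧ M.truth v σ A := by
  simp [TForm.diaP, TForm.neg, TModel.truth]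

lemma truth_ex {F : TFrame} (M : TModel F) (w : F.W) (σ : ℕ → F.U) (x : ℕ) (A : TForm) :
    M.truth w σ (TForm.ex x A) ↔
      ∃ τ : ℕ → F.U, (∀ y, y ≠ x → τ y = σ y) ∧ τ x ∈ F.D w ∧ M.truth w τ A := by
  simp [TForm.ex, TForm.neg, TModel.truth]

/-- Forward persistence of Gödel-translated formulas. -/
lemma truth_t_mono {F : TFrame} (M : TModel F) (A : IForm) :
    ∀ {v w : F.W}, F.R v w → ∀ σ : ℕ → F.U, M.truth v σ A.t → M.truth w σ A.t := by
  induction A with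
  | falsum => intro v w _ σ h; exact h.elim
  | atom p args => intro v w h σ H u hu; exact H u (F.trans h hu)
  | and A B ihA ihB =>
      intro v w h σ H
      rw [IForm.t, truth_and] at *
      exact ⟨ihA h σ H.1, ihB h σ H.2⟩
  | or A B ihA ihB =>
      intro v w h σ H
      rw [IForm.t, truth_or] at *
      exact H.imp (ihA h σ) (ihB h σ)
  | impl A B ihA ihB => intro v w h σ H u hu; exact H u (F.trans h hu)
  | all x A ih => intro v w h σ H u hu; exact H u (F.trans h hu)
  | ex x A ih =>
      intro v w h σ H
      rw [IForm.t, truth_diaP] at *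
      obtain ⟨u, hu, hA⟩ := H
      exact ⟨u, F.trans hu h, hA⟩

/-- Monotonicity of intuitionistic truth. -/
lemma itruth_mono {F : IFrame} (M : IModel F) (A : IForm) :
    ∀ {w v : F.W}, F.R w v → ∀ σ : ℕ → F.α, M.truth w σ A → M.truth v σ A := by
  induction A with
  | falsum => intro w v _ σ h; exact h.elim
  | atom p args => intro w v h σ H; exact M.Imono _ _ h H
  | and A B ihA ihB => intro w v h σ H; exact ⟨ihA h σ H.1, ihB h σ H.2⟩
  | or A B ihA ihB => intro w v h σ H; exact H.imp (ihA h σ) (ihB h σ)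
  | impl A B ihA ihB => intro w v h σ H u hu; exact H u (F.trans h hu)
  | all x A ih => intro w v h σ H u hu; exact H u (F.trans h hu)
  | ex x A ih =>
      intro w v h σ H
      obtain ⟨τ, h1, h2, h3⟩ := H
      exact ⟨τ, h1, F.Dmono h h2, ih h τ h3⟩

/-- Intuitionistic truth depends only on the free variables. -/
lemma itruth_congr {F : IFrame} (M : IModel F) (A : IForm) :
    ∀ (w : F.W) (σ₁ σ₂ : ℕ → F.α), (∀ x ∈ A.freeVars, σ₁ x = σ₂ x) →
      M.truth w σ₁ A → M.truth w σ₂ A := by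
  induction A with
  | falsum => intro w σ₁ σ₂ _ h; exact h.elim
  | atom p args =>
      intro w σ₁ σ₂ hag H
      have : args.map σ₂ = args.map σ₁ := by
        apply List.map_congr_left
        intro a ha
        exact (hag a (by simp [IForm.freeVars, ha])).symm
      show M.I w p (args.map σ₂)
      rw [this]; exact H
  | and A B ihA ihB =>
      intro w σ₁ σ₂ hag H
      exact ⟨ihA w σ₁ σ₂ (fun x hx => hag x (by simp [IForm.freeVars, hx])) H.1,
             ihB w σ₁ σ₂ (fun x hx => hag x (by simp [IForm.freeVars, hx])) H.2⟩
  | or A B ihA ihB =>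
      intro w σ₁ σ₂ hag H
      exact H.imp (ihA w σ₁ σ₂ (fun x hx => hag x (by simp [IForm.freeVars, hx])))
                  (ihB w σ₁ σ₂ (fun x hx => hag x (by simp [IForm.freeVars, hx])))
  | impl A B ihA ihB =>
      intro w σ₁ σ₂ hag H v hv hA
      exact ihB v σ₁ σ₂ (fun x hx => hag x (by simp [IForm.freeVars, hx]))
        (H v hv (ihA v σ₂ σ₁ (fun x hx => (hag x (by simp [IForm.freeVars, hx])).symm) hA))
  | all x A ih =>
      intro w σ₁ σ₂ hag H v hv τ hτ hx
      have h1 := H v hv (fun y => if y = x then τ x else σ₁ y)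
        (fun y hy => if_neg hy) (by simpa using hx)
      apply ih v _ τ _ h1
      intro y hy
      by_cases hxy : y = x
      · subst hxy; simp
      · simp only [if_neg hxy]
        rw [hag y (by simp [IForm.freeVars, hy, hxy]), ← hτ y hxy]
  | ex x A ih =>
      intro w σ₁ σ₂ hag H
      obtain ⟨τ, h1, h2, h3⟩ := H
      refine ⟨fun y => if y = x then τ x else σ₂ y, fun y hy => if_neg hy, by simpa using h2, ?_⟩
      apply ih w τ _ _ h3
      intro y hy
      by_cases hxy : y = x
      · subst hxy; simp
      · simp only [if_neg hxy]
        rw [h1 y hxy, ← hag y (by simp [IForm.freeVars, hy, hxy])]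

/-- Main lemma: the semantic correctness of the temporal Gödel translation. -/
lemma godel_main {F : IFrame} (M : IModel F) (A : IForm) :
    ∀ (w : F.W) (σ : ℕ → F.bar.U),
      (∀ x ∈ A.freeVars, (σ x).1 ∈ F.D w) →
      (M.truth w (fun x => (σ x).1) A ↔ M.bar.truth w σ A.t) := by
  induction A with
  | falsum => intro w σ _; exact Iff.rfl
  | atom p args =>
      intro w σ hσ
      show M.I w p (args.map _) ↔ ∀ v, F.R w v → M.I v p ((args.map σ).map Subtype.val)
      erw [List.map_map]
      constructor
      · intro H v hv; exact M.Imono _ _ hv H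
      · intro H; exact H w (F.refl w)
  | and A B ihA ihB =>
      intro w σ hσ
      erw [IForm.t, truth_and]
      exact and_congr (ihA w σ fun x hx => hσ x (by simp [IForm.freeVars, hx]))
                      (ihB w σ fun x hx => hσ x (by simp [IForm.freeVars, hx]))
  | or A B ihA ihB =>
      intro w σ hσ
      erw [IForm.t, truth_or]
      exact or_congr (ihA w σ fun x hx => hσ x (by simp [IForm.freeVars, hx]))
                     (ihB w σ fun x hx => hσ x (by simp [IForm.freeVars, hx]))
  | impl A B ihA ihB =>
      intro w σ hσ
      constructor
      · intro H v hv hA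
        exact (ihB v σ fun x hx => F.Dmono hv (hσ x (by simp [IForm.freeVars, hx]))).mp
          (H v hv ((ihA v σ fun x hx => F.Dmono hv (hσ x (by simp [IForm.freeVars, hx]))).mpr hA))
      · intro H v hv hA
        exact (ihB v σ fun x hx => F.Dmono hv (hσ x (by simp [IForm.freeVars, hx]))).mpr
          (H v hv ((ihA v σ fun x hx => F.Dmono hv (hσ x (by simp [IForm.freeVars, hx]))).mp hA))
  | all x A ih =>
      intro w σ hσ
      constructor
      · intro H v hv τ hτ hx
        have cond : ∀ y ∈ A.freeVars, (τ y).1 ∈ F.D v := by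
          intro y hy
          by_cases hxy : y = x
          · subst hxy; exact hx
          · rw [hτ y hxy]
            exact F.Dmono hv (hσ y (by simp [IForm.freeVars, hy, hxy]))
        exact (ih v τ cond).mp (H v hv (fun y => (τ y).1)
          (fun y hy => congrArg Subtype.val (hτ y hy)) hx)
      · intro H v hv τ hτ hx
        set τh : ℕ → F.bar.U := fun y => if h : y = x then ⟨τ x, v, hx⟩ else σ y with hτh
        have hagree : ∀ y, y ≠ x → τh y = σ y := fun y hy => dif_neg hy
        have hxm : τh x ∈ F.bar.D v := by simp [hτh]; exact hx
        have hT := H v hv τh hagree hxm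
        have cond : ∀ y ∈ A.freeVars, (τh y).1 ∈ F.D v := by
          intro y hy
          by_cases hxy : y = x
          · subst hxy; simpa [hτh] using hx
          · simp only [hτh, dif_neg hxy]
            exact (congrArg (fun a : F.bar.U => a.1 ∈ F.D v) (hagree y hxy)).mpr (F.Dmono hv (hσ y (by simp [IForm.freeVars, hy, hxy])))
        have hI := (ih v τh cond).mpr hT
        apply itruth_congr M A v _ τ _ hI
        intro y _
        by_cases hxy : y = x
        · subst hxy; simp [hτh]
        · simp only [hτh, dif_neg hxy]
          exact (congrArg Subtype.val (hagree y hxy)).trans (hτ y hxy).symm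
  | ex x A ih =>
      intro w σ hσ
      erw [IForm.t, truth_diaP]
      constructor
      · rintro ⟨τ, h1, h2, h3⟩
        refine ⟨w, F.refl w, ?_⟩
        erw [truth_ex]
        set τh : ℕ → F.bar.U := fun y => if h : y = x then ⟨τ x, w, h2⟩ else σ y with hτh
        refine ⟨τh, fun y hy => dif_neg hy, by simp [hτh]; exact h2, ?_⟩
        have cond : ∀ y ∈ A.freeVars, (τh y).1 ∈ F.D w := by
          intro y hy
          by_cases hxy : y = x
          · subst hxy; simpa [hτh] using h2
          · simp only [hτh, dif_neg hxy]
            exact (congrArg (fun a : F.bar.U => a.1 ∈ F.D w) (dif_neg hxy : τh y = σ y)).mpr (hσ y (by simp [IForm.freeVars, hy, hxy]))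
        refine (ih w τh cond).mp ?_
        apply itruth_congr M A w τ _ _ h3
        intro y _
        by_cases hxy : y = x
        · subst hxy; simp [hτh]
        · simp only [hτh, dif_neg hxy]
          exact (h1 y hxy).trans (congrArg Subtype.val (dif_neg hxy : τh y = σ y)).symm
      · rintro ⟨v, hvw, hE⟩
        erw [truth_ex] at hE
        obtain ⟨τ, h1, h2, h3⟩ := hE
        have h3' : M.bar.truth w τ A.t := truth_t_mono M.bar A hvw τ h3
        have cond : ∀ y ∈ A.freeVars, (τ y).1 ∈ F.D w := by
          intro y hy
          by_cases hxy : y = x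
          · subst hxy; exact F.Dmono hvw h2
          · rw [h1 y hxy]
            exact hσ y (by simp [IForm.freeVars, hy, hxy])
        refine ⟨fun y => (τ y).1, fun y hy => congrArg Subtype.val (h1 y hy),
          F.Dmono hvw h2, (ih w τ cond).mpr h3'⟩

/-- Truth of a universal closure. -/
lemma truth_closure {F : TFrame} (M : TModel F) (B : TForm) :
    ∀ (xs : List ℕ) (w : F.W) (σ : ℕ → F.U),
      M.truth w σ (TForm.closure xs B) ↔
        ∀ τ : ℕ → F.U, (∀ y, y ∉ xs → τ y = σ y) → (∀ y ∈ xs, τ y ∈ F.D w) →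
          M.truth w τ B := by
  intro xs
  induction xs with
  | nil =>
      intro w σ
      constructor
      · intro h τ hτ _
        have : τ = σ := funext fun y => hτ y List.not_mem_nil
        rwa [this]
      · intro h
        exact h σ (fun _ _ => rfl) (fun _ h => absurd h List.not_mem_nil)
  | cons x xs ih =>
      intro w σ
      show M.truth w σ (TForm.all x (TForm.closure xs B)) ↔ _
      constructor
      · intro H τ hτ hD
        have h1 := H (fun y => if y = x then τ x else σ y) (fun y hy => if_neg hy)
          (by simpa using hD x (by simp))
        rw [ih] at h1
        apply h1
        · intro y hy
          by_cases hxy : y = x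
          · subst hxy; simp
          · simp only [if_neg hxy]
            exact hτ y (by simp [hxy, hy])
        · intro y hy; exact hD y (by simp [hy])
      · intro H τ₁ hτ₁ hx
        rw [ih]
        intro τ hτ hD
        apply H
        · intro y hy
          rw [List.mem_cons, not_or] at hy
          exact (hτ y hy.2).trans (hτ₁ y hy.1)
        · intro y hy
          rcases List.mem_cons.mp hy with h | h
          · subst h
            by_cases hmem : y ∈ xs
            · exact hD y hmem
            · rw [hτ y hmem]; exact hx
          · exact hD y h

end Aux

/-- For an IQC-model `M` and a world `w`: `A` is intuitionistically true at `w`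
(under all `w`-assignments) iff `∀x₁ ⋯ ∀xₙ A^t` is true at `w` in the
associated Q∘S4.t-model `M̄`, where `x₁, …, xₙ` are the free variables of `A`. -/
theorem iqc_truth_iff_bar_closure_truth (F : IFrame) (M : IModel F) (A : IForm)
    (xs : List ℕ) (hnd : xs.Nodup) (hfv : xs.toFinset = A.freeVars) (w : F.W) :
    (∀ σ : ℕ → F.α, (∀ x, σ x ∈ F.D w) → M.truth w σ A) ↔
      (∀ σ : ℕ → F.bar.U, M.bar.truth w σ (TForm.closure xs A.t)) := by
  constructor
  · intro h σ
    erw [truth_closure]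
    intro τ hτ hD
    have hcond : ∀ x ∈ A.freeVars, (τ x).1 ∈ F.D w := by
      intro x hx
      exact hD x (by rw [← hfv] at hx; simpa using hx)
    rw [← godel_main M A w τ hcond]
    obtain ⟨d, hd⟩ := F.Dne w
    set ρ : ℕ → F.α := fun y => if y ∈ A.freeVars then (τ y).1 else d with hρ
    have hρD : ∀ x, ρ x ∈ F.D w := by
      intro x
      by_cases hx : x ∈ A.freeVars
      · simpa [hρ, hx] using hcond x hx
      · simpa [hρ, hx] using hd
    apply itruth_congr M A w ρ _ _ (h ρ hρD)
    intro y hy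
    simp [hρ, hy]
  · intro h σ hσ
    set σh : ℕ → F.bar.U := fun y => ⟨σ y, w, hσ y⟩ with hσh
    have h1 := h σh
    erw [truth_closure] at h1
    have ht := h1 σh (fun _ _ => rfl) (fun y _ => hσ y)
    exact (godel_main M A w σh (fun x _ => hσ x)).mpr ht
end
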